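/- arXiv:1711.07723 — 3 statements merged into one kernel-verified Lean document; each statement's English description precedes it below -/
import Mathlib

section
/- Let b, d be positive reals and 0 < c < 1, and let h = h_{b,c,d}. Then for all integers m, n with 1 ≤ m < n, we have h(n)/h(m) > (n/m)^{bc·(log n)^{c−1}}. -/
/-- The function `h_{b,c,d}(n) = d·2^{b (log₂ n)^c}`. -/
noncomputable def hf (b c d : ℝ) (n : ℕ) : ℝ :=
  d * (2 : ℝ) ^ (b * Real.logb 2 (n : ℝ) ^ c)

/-- For `h = h_{b,c,d}` with `b,d > 0` and `0 < c < 1`, and all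
integers `1 ≤ m < n`, we have `h(n)/h(m) > (n/m)^{bc(log₂ n)^{c-1}}`. -/
theorem statement4 (b c d : ℝ) (hb : 0 < b) (hd : 0 < d) (hc0 : 0 < c) (hc1 : c < 1)
    (m n : ℕ) (hm : 1 ≤ m) (hmn : m < n) :
    ((n : ℝ) / (m : ℝ)) ^ (b * c * Real.logb 2 (n : ℝ) ^ (c - 1)) <
      hf b c d n / hf b c d m := by
  have hm0 : (0 : ℝ) < (m : ℝ) := by exact_mod_cast hm
  have hmn' : (m : ℝ) < (n : ℝ) := by exact_mod_cast hmn
  have hn0 : (0 : ℝ) < (n : ℝ) := hm0.trans hmn'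
  have hm1 : (1 : ℝ) ≤ (m : ℝ) := by exact_mod_cast hm
  set x := Real.logb 2 (n : ℝ) with hxdef
  set y := Real.logb 2 (m : ℝ) with hydef
  have hy0 : 0 ≤ y := Real.logb_nonneg one_lt_two hm1
  have hyx : y < x := Real.logb_lt_logb one_lt_two hm0 hmn'
  have hx0 : 0 < x := lt_of_le_of_lt hy0 hyx
  -- key concavity inequality
  set t := y / x with htdef
  have ht0 : 0 ≤ t := div_nonneg hy0 hx0.le
  have ht1 : t < 1 := (div_lt_one hx0).mpr hyx
  have hyt : y = t * x := by rw [htdef, div_mul_cancel₀ y hx0.ne']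
  have hbern : t ^ c < c * t + (1 - c) := by
    have := rpow_one_add_lt_one_add_mul_self (s := t - 1) (by linarith) (by
      intro h; apply absurd (by linarith : t = 1) (ne_of_lt ht1)) hc0 hc1
    have h1 : (1 : ℝ) + (t - 1) = t := by ring
    rw [h1] at this
    linarith
  have hyc : y ^ c = t ^ c * x ^ c := by
    rw [hyt, Real.mul_rpow ht0 hx0.le]
  have hxc1 : x ^ (c - 1) * x = x ^ c := by
    rw [← Real.rpow_add_one hx0.ne' (c - 1)]
    ring_nf
  have hxcpos : 0 < x ^ c := Real.rpow_pos_of_pos hx0 c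
  have key : c * x ^ (c - 1) * (x - y) < x ^ c - y ^ c := by
    have h2 : c * x ^ (c - 1) * (x - y) = c * (1 - t) * x ^ c := by
      rw [hyt, ← hxc1]; ring
    rw [h2, hyc]
    have : t ^ c * x ^ c < (c * t + (1 - c)) * x ^ c := by
      exact mul_lt_mul_of_pos_right hbern hxcpos
    nlinarith
  -- rewrite both sides as powers of 2
  have hdiv : (n : ℝ) / (m : ℝ) = (2 : ℝ) ^ (x - y) := by
    rw [hxdef, hydef, ← Real.logb_div hn0.ne' hm0.ne' ..]
    rw [Real.rpow_logb two_pos (by norm_num) (div_pos hn0 hm0)]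
  have hhf : hf b c d n / hf b c d m = (2 : ℝ) ^ (b * x ^ c - b * y ^ c) := by
    unfold hf
    rw [Real.rpow_sub two_pos]
    rw [mul_div_mul_left _ _ hd.ne']
  rw [hhf, hdiv, ← Real.rpow_mul (by norm_num : (0:ℝ) ≤ 2)]
  apply Real.rpow_lt_rpow_left_iff (x := (2:ℝ)) one_lt_two |>.mpr
  nlinarith
end

section
/- Let Q1 be the 3-by-4 0-1 matrix with rows (1,0,1,0), (1,0,0,1), (0,1,0,1). If m > 2n/u, then Q1 has a block-respecting embedding in every (4,u)-complete m-by-4n 0-1 matrix A. -/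
open scoped Classical

/-- The column of `Fin (k*n)` corresponding to position `c` within vertical block `j`. -/
def blockIdx {k n : ℕ} (j : Fin k) (c : Fin n) : Fin (k * n) :=
  ⟨(j : ℕ) * n + (c : ℕ), by
    have h1 : (j : ℕ) + 1 ≤ k := j.isLt
    have h2 : (c : ℕ) < n := c.isLt
    calc (j : ℕ) * n + (c : ℕ) < (j : ℕ) * n + n := by omega
      _ = ((j : ℕ) + 1) * n := by ring
      _ ≤ k * n := Nat.mul_le_mul_right n h1⟩

/-- An `m × (k*n)` 0-1 matrix is `(k,u)`-complete if every row has at least `u`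
1-entries in each of the `k` vertical blocks. -/
def KUComplete (k n u : ℕ) {m : ℕ} (A : Matrix (Fin m) (Fin (k * n)) Bool) : Prop :=
  ∀ (i : Fin m) (j : Fin k),
    u ≤ (Finset.univ.filter (fun c : Fin n => A i (blockIdx j c) = true)).card

/-- `Q` has a block-respecting embedding in `A`: there are a strictly increasing row map
and a column map sending column `j` of `Q` into the `j`-th vertical block of `A`. -/
def HasBlockEmb {l k m n : ℕ} (Q : Matrix (Fin l) (Fin k) Bool)
    (A : Matrix (Fin m) (Fin (k * n)) Bool) : Prop :=
  ∃ (f : Fin l → Fin m) (g : Fin k → Fin n),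
    StrictMono f ∧ ∀ i j, Q i j = true → A (f i) (blockIdx j (g j)) = true

def Q1 : Matrix (Fin 3) (Fin 4) Bool :=
  !![true, false, true, false; true, false, false, true; false, true, false, true]

/-- Rows whose block-`j` support is disjoint from that of every earlier (resp. later,
depending on the order relation used) row are few: their number times `u` is at most `n`. -/
lemma card_new_rows_le {m n u : ℕ} (S : Fin m → Finset (Fin n))
    (hS : ∀ i, u ≤ (S i).card) (r : Fin m → Fin m → Prop) [DecidableRel r]
    (L : Finset (Fin m))
    (hL : L = Finset.univ.filter (fun i => ∀ i', r i' i → Disjoint (S i') (S i)))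
    (hr : ∀ i i' : Fin m, i ≠ i' → r i i' ∨ r i' i) :
    u * L.card ≤ n := by
  have hdisj : ∀ x ∈ L, ∀ y ∈ L, x ≠ y → Disjoint (S x) (S y) := by
    intro x hx y hy hxy
    rw [hL, Finset.mem_filter] at hx hy
    rcases hr x y hxy with h | h
    · exact hy.2 x h
    · exact (hx.2 y h).symm
  calc u * L.card = ∑ _i ∈ L, u := by rw [Finset.sum_const, smul_eq_mul, mul_comm]
    _ ≤ ∑ i ∈ L, (S i).card := Finset.sum_le_sum fun i _ => hS i
    _ = (L.biUnion S).card := (Finset.card_biUnion hdisj).symm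
    _ ≤ (Finset.univ : Finset (Fin n)).card := Finset.card_le_card (Finset.subset_univ _)
    _ = n := Finset.card_univ.trans (Fintype.card_fin n)

/-- If `m > 2n/u`, then `Q1` has a block-respecting embedding in every
`(4,u)`-complete `m × 4n` 0-1 matrix `A`. -/
theorem statement6 (m n u : ℕ) (hu : 0 < u)
    (A : Matrix (Fin m) (Fin (4 * n)) Bool)
    (hA : KUComplete 4 n u A)
    (hm : 2 * (n : ℝ) / (u : ℝ) < (m : ℝ)) :
    HasBlockEmb Q1 A := by
  -- numeric consequence: 2 * n < u * m
  have hnum : 2 * n < u * m := by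
    have hu' : (0:ℝ) < (u:ℝ) := by exact_mod_cast hu
    have : 2 * (n:ℝ) < (u:ℝ) * (m:ℝ) := by
      rw [div_lt_iff₀ hu'] at hm; linarith
    exact_mod_cast this
  set S : Fin m → Finset (Fin n) :=
    fun i => Finset.univ.filter (fun c => A i (blockIdx (0 : Fin 4) c) = true) with hSdef
  set T : Fin m → Finset (Fin n) :=
    fun i => Finset.univ.filter (fun c => A i (blockIdx (3 : Fin 4) c) = true) with hTdef
  have hScard : ∀ i, u ≤ (S i).card := fun i => hA i 0
  have hTcard : ∀ i, u ≤ (T i).card := fun i => hA i 3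
  set L : Finset (Fin m) :=
    Finset.univ.filter (fun i => ∀ i', i' < i → Disjoint (S i') (S i)) with hLdef
  set R : Finset (Fin m) :=
    Finset.univ.filter (fun i => ∀ i', i < i' → Disjoint (T i') (T i)) with hRdef
  have hLcard : u * L.card ≤ n :=
    card_new_rows_le S hScard (· < ·) L hLdef (fun i i' h => h.lt_or_gt)
  have hRcard : u * R.card ≤ n :=
    card_new_rows_le T hTcard (fun a b => b < a) R hRdef (fun i i' h => h.lt_or_gt.symm)
  -- find a row in neither L nor R
  have hex : ∃ i : Fin m, i ∉ L ∪ R := by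
    by_contra h
    push_neg at h
    have : (L ∪ R) = Finset.univ := Finset.eq_univ_iff_forall.mpr h
    have hcard : m ≤ L.card + R.card := by
      calc m = (Finset.univ : Finset (Fin m)).card := by simp
        _ = (L ∪ R).card := by rw [this]
        _ ≤ L.card + R.card := Finset.card_union_le L R
    have : u * m ≤ u * (L.card + R.card) := Nat.mul_le_mul_left u hcard
    rw [Nat.mul_add] at this
    omega
  obtain ⟨i, hi⟩ := hex
  rw [Finset.mem_union, not_or] at hi
  obtain ⟨hiL, hiR⟩ := hi
  rw [hLdef, Finset.mem_filter] at hiL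
  rw [hRdef, Finset.mem_filter] at hiR
  push_neg at hiL hiR
  obtain ⟨i', hi'lt, hi'nd⟩ := hiL (Finset.mem_univ i)
  obtain ⟨i'', hi''lt, hi''nd⟩ := hiR (Finset.mem_univ i)
  obtain ⟨c0, hc0S, hc0S'⟩ := Finset.not_disjoint_iff.mp hi'nd
  obtain ⟨c3, hc3T, hc3T'⟩ := Finset.not_disjoint_iff.mp hi''nd
  -- choose columns in blocks 1 and 2
  have h1 : (Finset.univ.filter (fun c : Fin n => A i'' (blockIdx (1:Fin 4) c) = true)).Nonempty := by
    rw [← Finset.card_pos]; exact lt_of_lt_of_le hu (hA i'' 1)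
  have h2 : (Finset.univ.filter (fun c : Fin n => A i' (blockIdx (2:Fin 4) c) = true)).Nonempty := by
    rw [← Finset.card_pos]; exact lt_of_lt_of_le hu (hA i' 2)
  obtain ⟨c1, hc1⟩ := h1
  obtain ⟨c2, hc2⟩ := h2
  rw [Finset.mem_filter] at hc1 hc2
  -- unpack memberships in S, T
  have hA0' : A i' (blockIdx (0:Fin 4) c0) = true := (Finset.mem_filter.mp hc0S).2
  have hA0 : A i (blockIdx (0:Fin 4) c0) = true := (Finset.mem_filter.mp hc0S').2
  have hA3'' : A i'' (blockIdx (3:Fin 4) c3) = true := (Finset.mem_filter.mp hc3T).2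
  have hA3 : A i (blockIdx (3:Fin 4) c3) = true := (Finset.mem_filter.mp hc3T').2
  refine ⟨![i', i, i''], ![c0, c1, c2, c3], ?_, ?_⟩
  · intro a b hab
    fin_cases a <;> fin_cases b <;>
      simp only [Matrix.cons_val_zero, Matrix.cons_val_one, Matrix.head_cons,
        Matrix.cons_val_two, Matrix.tail_cons] <;>
      first
        | exact absurd hab (by decide)
        | exact hi'lt
        | exact hi''lt
        | exact hi'lt.trans hi''lt
  · intro a b hab
    fin_cases a <;> fin_cases b <;>
      first
        | exact absurd hab (by decide)
        | exact hA0'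
        | exact hA0
        | exact hA3
        | exact hA3''
        | exact hc1.2
        | exact hc2.2
end

section
/- Every vertically degenerate 0-1 matrix is acyclic; that is, a vertically degenerate 0-1 matrix contains no submatrix P' such that every row and every column of P' contains at least two 1-entries. -/
/-- The weight of a 0-1 matrix: the number of its 1-entries. -/
def wt {l k : ℕ} (P : Matrix (Fin l) (Fin k) Bool) : ℕ :=
  (Finset.univ.filter (fun p : Fin l × Fin k => P p.1 p.2 = true)).card

/-- `P` is vertically separable at `a`: at most one column has 1-entries both among
the first `a` rows and among the remaining rows. -/
def VSepAt {l k : ℕ} (a : ℕ) (P : Matrix (Fin l) (Fin k) Bool) : Prop :=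
  ∀ y₁ y₂ : Fin k,
    ((∃ x : Fin l, (x : ℕ) < a ∧ P x y₁ = true) ∧ (∃ x : Fin l, a ≤ (x : ℕ) ∧ P x y₁ = true)) →
    ((∃ x : Fin l, (x : ℕ) < a ∧ P x y₂ = true) ∧ (∃ x : Fin l, a ≤ (x : ℕ) ∧ P x y₂ = true)) →
    y₁ = y₂

/-- `P` is vertically separable. -/
def VSep {l k : ℕ} (P : Matrix (Fin l) (Fin k) Bool) : Prop :=
  ∃ a : ℕ, 1 ≤ a ∧ a < l ∧ VSepAt a P

/-- `P` is vertically degenerate: every (nonempty) submatrix either has a single row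
or is vertically separable. -/
def VDeg {l k : ℕ} (P : Matrix (Fin l) (Fin k) Bool) : Prop :=
  ∀ (l' k' : ℕ) (f : Fin l' → Fin l) (g : Fin k' → Fin k),
    StrictMono f → StrictMono g → 1 ≤ l' → 1 ≤ k' →
      l' = 1 ∨ VSep (fun i j => P (f i) (g j))

/-- `P` is acyclic: it has no (nonempty) submatrix in which every row and every column
has at least two 1-entries. -/
def MatAcyclic {l k : ℕ} (P : Matrix (Fin l) (Fin k) Bool) : Prop :=
  ¬ ∃ (l' k' : ℕ) (f : Fin l' → Fin l) (g : Fin k' → Fin k),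
      1 ≤ l' ∧ 1 ≤ k' ∧ StrictMono f ∧ StrictMono g ∧
      (∀ i : Fin l', 2 ≤ (Finset.univ.filter (fun j : Fin k' => P (f i) (g j) = true)).card) ∧
      (∀ j : Fin k', 2 ≤ (Finset.univ.filter (fun i : Fin l' => P (f i) (g j) = true)).card)

lemma wt_eq_sum_rows {l k : ℕ} (Q : Matrix (Fin l) (Fin k) Bool) :
    wt Q = ∑ x : Fin l, (Finset.univ.filter fun y => Q x y = true).card := by
  rw [wt, Finset.card_filter, Fintype.sum_prod_type]
  exact Finset.sum_congr rfl fun x _ => (Finset.card_filter _ _).symm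

lemma wt_eq_sum_cols {l k : ℕ} (Q : Matrix (Fin l) (Fin k) Bool) :
    wt Q = ∑ y : Fin k, (Finset.univ.filter fun x => Q x y = true).card := by
  rw [wt, Finset.card_filter, Fintype.sum_prod_type_right]
  exact Finset.sum_congr rfl fun y _ => (Finset.card_filter _ _).symm

/-- A matrix "contains a cycle": has a submatrix with all rows/cols having ≥ 2 ones. -/
def Cyc {l k : ℕ} (Q : Matrix (Fin l) (Fin k) Bool) : Prop :=
  ∃ (l' k' : ℕ) (f : Fin l' → Fin l) (g : Fin k' → Fin k),
      1 ≤ l' ∧ 1 ≤ k' ∧ StrictMono f ∧ StrictMono g ∧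
      (∀ i : Fin l', 2 ≤ (Finset.univ.filter (fun j : Fin k' => Q (f i) (g j) = true)).card) ∧
      (∀ j : Fin k', 2 ≤ (Finset.univ.filter (fun i : Fin l' => Q (f i) (g j) = true)).card)

lemma cyc_comp {l k l0 k0 : ℕ} (Q : Matrix (Fin l) (Fin k) Bool)
    (f0 : Fin l0 → Fin l) (g0 : Fin k0 → Fin k) (hf0 : StrictMono f0) (hg0 : StrictMono g0)
    (h : Cyc (fun i j => Q (f0 i) (g0 j))) : Cyc Q := by
  obtain ⟨l', k', f, g, h1, h2, hf, hg, hr, hc⟩ := h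
  exact ⟨l', k', f0 ∘ f, g0 ∘ g, h1, h2, hf0.comp hf, hg0.comp hg, hr, hc⟩

lemma wtLemma : ∀ (N l k : ℕ) (Q : Matrix (Fin l) (Fin k) Bool),
    l + k ≤ N → 1 ≤ wt Q → l + k ≤ wt Q → Cyc Q := by
  intro N
  induction N with
  | zero =>
    intro l k Q hN h1 h2
    -- l = k = 0, so wt Q = 0
    obtain rfl : l = 0 := by omega
    obtain rfl : k = 0 := by omega
    simp [wt, Finset.filter_eq_empty_iff] at h1
  | succ N ih =>
    intro l k Q hN h1 h2
    have hne : (Finset.univ.filter (fun p : Fin l × Fin k => Q p.1 p.2 = true)).Nonempty :=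
      Finset.card_pos.mp h1
    obtain ⟨p, hp⟩ := hne
    have hl : 1 ≤ l := Fin.pos p.1
    have hk : 1 ≤ k := Fin.pos p.2
    by_cases hr : ∀ x : Fin l, 2 ≤ (Finset.univ.filter fun y => Q x y = true).card
    · by_cases hc : ∀ y : Fin k, 2 ≤ (Finset.univ.filter fun x => Q x y = true).card
      · exact ⟨l, k, id, id, Fin.pos p.1, Fin.pos p.2, strictMono_id, strictMono_id, hr, hc⟩
      · -- a column y with ≤ 1 ones: delete it
        push_neg at hc
        obtain ⟨y, hy⟩ := hc
        obtain ⟨m, rfl⟩ : ∃ m, k = m + 1 := ⟨y.val + (k - (y.val+1)), by omega⟩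
        set Q' : Matrix (Fin l) (Fin m) Bool := fun i j => Q i (y.succAbove j) with hQ'
        have hwt : wt Q = (Finset.univ.filter fun x => Q x y = true).card + wt Q' := by
          rw [wt_eq_sum_cols, wt_eq_sum_cols Q', Fin.sum_univ_succAbove
            (fun z => (Finset.univ.filter fun x => Q x z = true).card) y]
        have h1' : 1 ≤ wt Q' := by omega
        have h2' : l + m ≤ wt Q' := by omega
        exact cyc_comp Q id y.succAbove strictMono_id (Fin.strictMono_succAbove y)
          (ih l m Q' (by omega) h1' h2')
    · push_neg at hr
      obtain ⟨x, hx⟩ := hr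
      obtain ⟨n, rfl⟩ : ∃ n, l = n + 1 := ⟨x.val + (l - (x.val+1)), by omega⟩
      set Q' : Matrix (Fin n) (Fin k) Bool := fun i j => Q (x.succAbove i) j with hQ'
      have hwt : wt Q = (Finset.univ.filter fun y => Q x y = true).card + wt Q' := by
        rw [wt_eq_sum_rows, wt_eq_sum_rows Q', Fin.sum_univ_succAbove
          (fun z => (Finset.univ.filter fun y => Q z y = true).card) x]
      have h1' : 1 ≤ wt Q' := by omega
      have h2' : n + k ≤ wt Q' := by omega
      exact cyc_comp Q x.succAbove id (Fin.strictMono_succAbove x) strictMono_id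
        (ih n k Q' (by omega) h1' h2')

lemma main_aux {l k : ℕ} (P : Matrix (Fin l) (Fin k) Bool) (hdeg : VDeg P) :
    ∀ (N l' k' : ℕ) (f : Fin l' → Fin l) (g : Fin k' → Fin k), l' ≤ N →
    StrictMono f → StrictMono g → 1 ≤ l' → 1 ≤ k' →
    (∀ i : Fin l', 2 ≤ (Finset.univ.filter (fun j : Fin k' => P (f i) (g j) = true)).card) →
    (∀ j : Fin k', 2 ≤ (Finset.univ.filter (fun i : Fin l' => P (f i) (g j) = true)).card) →
    False := by
  intro N
  induction N with
  | zero => intro l' k' f g hN _ _ hl _ _ _; omega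
  | succ N ih =>
    intro l' k' f g hN hf hg hl hk hrow hcol
    rcases hdeg l' k' f g hf hg hl hk with h1 | ⟨a, ha1, ha2, hsep⟩
    · -- single row: a column can have at most one 1
      subst h1
      have hj : k' ≠ 0 := by omega
      have h2 := hcol ⟨0, by omega⟩
      have h3 : (Finset.univ.filter (fun i : Fin 1 => P (f i) (g ⟨0, by omega⟩) = true)).card
          ≤ 1 := le_trans (Finset.card_filter_le _ _) (by simp)
      omega
    · -- vertically separable at a
      set C : Finset (Fin k') :=
        Finset.univ.filter (fun y => ∃ x : Fin l', (x : ℕ) < a ∧ P (f x) (g y) = true) with hC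
      set m := C.card with hm
      set e : Fin m ≃o {y // y ∈ C} := C.orderIsoOfFin rfl with he
      set ge : Fin m → Fin k' := fun j => (e j : Fin k') with hge
      have hgemono : StrictMono ge := fun i j h => Subtype.coe_lt_coe.mpr (e.strictMono h)
      set cle : Fin a → Fin l' := Fin.castLE ha2.le with hcle
      have hclemono : StrictMono cle := Fin.strictMono_castLE ha2.le
      set Qt : Matrix (Fin a) (Fin m) Bool := fun i j => P (f (cle i)) (g (ge j)) with hQt
      -- membership of ge j in C
      have hgeC : ∀ j : Fin m, ∃ x : Fin l', (x : ℕ) < a ∧ P (f x) (g (ge j)) = true := by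
        intro j
        exact (Finset.mem_filter.mp (e j).2).2
      -- row bound
      have hrowQt : ∀ i : Fin a,
          2 ≤ (Finset.univ.filter (fun j : Fin m => Qt i j = true)).card := by
        intro i
        have h2r := hrow (cle i)
        have hsub : (Finset.univ.filter (fun y : Fin k' => P (f (cle i)) (g y) = true)) ⊆
            (Finset.univ.filter (fun j : Fin m => Qt i j = true)).image ge := by
          intro y hy
          rw [Finset.mem_filter] at hy
          have hyC : y ∈ C := by
            rw [hC, Finset.mem_filter]
            exact ⟨Finset.mem_univ _, cle i, i.2, hy.2⟩
          refine Finset.mem_image.mpr ⟨e.symm ⟨y, hyC⟩, ?_, ?_⟩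
          · rw [Finset.mem_filter]
            refine ⟨Finset.mem_univ _, ?_⟩
            show P (f (cle i)) (g (ge (e.symm ⟨y, hyC⟩))) = true
            have : ge (e.symm ⟨y, hyC⟩) = y := by
              rw [hge]; simp
            rw [this]; exact hy.2
          · rw [hge]; simp
        calc 2 ≤ _ := h2r
          _ ≤ ((Finset.univ.filter (fun j : Fin m => Qt i j = true)).image ge).card :=
            Finset.card_le_card hsub
          _ ≤ _ := Finset.card_image_le
      -- column bound ≥ 1
      have hcol1 : ∀ j : Fin m,
          1 ≤ (Finset.univ.filter (fun i : Fin a => Qt i j = true)).card := by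
        intro j
        obtain ⟨x, hx1, hx2⟩ := hgeC j
        refine Finset.card_pos.mpr ⟨⟨(x : ℕ), hx1⟩, ?_⟩
        rw [Finset.mem_filter]
        refine ⟨Finset.mem_univ _, ?_⟩
        show P (f (cle ⟨(x : ℕ), hx1⟩)) (g (ge j)) = true
        have : cle ⟨(x : ℕ), hx1⟩ = x := by apply Fin.ext; rfl
        rw [this]; exact hx2
      -- column bound ≥ 2 for non-crossing columns
      have hcol2 : ∀ j : Fin m, (¬ ∃ x : Fin l', a ≤ (x : ℕ) ∧ P (f x) (g (ge j)) = true) →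
          2 ≤ (Finset.univ.filter (fun i : Fin a => Qt i j = true)).card := by
        intro j hcross
        push_neg at hcross
        have h2c := hcol (ge j)
        have hmap : ∀ x : Fin l', (x : ℕ) < a ∨ ¬ P (f x) (g (ge j)) = true := by
          intro x
          by_cases hp : P (f x) (g (ge j)) = true
          · left; by_contra hxa; exact absurd hp (by simpa using hcross x (by omega))
          · right; exact hp
        set fmap : Fin l' → Fin a := fun x =>
          if h : (x : ℕ) < a then ⟨(x : ℕ), h⟩ else ⟨0, by omega⟩ with hfmap
        have := Finset.card_le_card_of_injOn fmap
          (s := Finset.univ.filter (fun x : Fin l' => P (f x) (g (ge j)) = true))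
          (t := Finset.univ.filter (fun i : Fin a => Qt i j = true)) ?_ ?_
        · omega
        · intro x hx
          rw [Finset.mem_coe, Finset.mem_filter] at hx ⊢
          have hxa : (x : ℕ) < a := by
            rcases hmap x with h | h
            · exact h
            · exact absurd hx.2 h
          refine ⟨Finset.mem_univ _, ?_⟩
          rw [hfmap]
          simp only [hxa, dif_pos]
          show P (f (cle ⟨(x : ℕ), hxa⟩)) (g (ge j)) = true
          have : cle ⟨(x : ℕ), hxa⟩ = x := by apply Fin.ext; rfl
          rw [this]; exact hx.2
        · intro x hx y hy hxy
          rw [Finset.coe_filter] at hx hy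
          have hxa : (x : ℕ) < a := by
            rcases hmap x with h | h
            · exact h
            · exact absurd hx.2 h
          have hya : (y : ℕ) < a := by
            rcases hmap y with h | h
            · exact h
            · exact absurd hy.2 h
          rw [hfmap] at hxy
          simp only [hxa, hya, dif_pos] at hxy
          rw [Fin.mk_eq_mk] at hxy
          exact Fin.ext hxy
      -- uniqueness of crossing column
      have huniq : ∀ j₁ j₂ : Fin m,
          (∃ x : Fin l', a ≤ (x : ℕ) ∧ P (f x) (g (ge j₁)) = true) →
          (∃ x : Fin l', a ≤ (x : ℕ) ∧ P (f x) (g (ge j₂)) = true) → j₁ = j₂ := by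
        intro j₁ j₂ hc1 hc2
        have := hsep (ge j₁) (ge j₂) ⟨hgeC j₁, hc1⟩ ⟨hgeC j₂, hc2⟩
        exact hgemono.injective this
      -- weight bounds
      have hwt1 : 2 * a ≤ wt Qt := by
        rw [wt_eq_sum_rows]
        calc 2 * a = ∑ _i : Fin a, 2 := by simp [mul_comm]
          _ ≤ _ := Finset.sum_le_sum (fun i _ => hrowQt i)
      have hwt2 : 2 * m ≤ wt Qt + 1 := by
        rw [wt_eq_sum_cols]
        by_cases hex : ∃ j₀ : Fin m, ∃ x : Fin l', a ≤ (x : ℕ) ∧ P (f x) (g (ge j₀)) = true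
        · obtain ⟨j₀, hj₀⟩ := hex
          rw [← Finset.add_sum_erase _ _ (Finset.mem_univ j₀)]
          have hb : ∑ j ∈ Finset.univ.erase j₀, 2 ≤
              ∑ j ∈ Finset.univ.erase j₀,
                (Finset.univ.filter (fun i : Fin a => Qt i j = true)).card := by
            refine Finset.sum_le_sum (fun j hj => ?_)
            refine hcol2 j (fun hcr => ?_)
            exact (Finset.mem_erase.mp hj).1 (huniq j j₀ hcr hj₀)
          rw [Finset.sum_const, Finset.card_erase_of_mem (Finset.mem_univ j₀)] at hb
          have hc1 := hcol1 j₀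
          have hcard : (Finset.univ : Finset (Fin m)).card = m := by simp
          rw [hcard] at hb
          have hm1 : 1 ≤ m := Fin.pos j₀
          simp only [smul_eq_mul] at hb
          omega
        · push_neg at hex
          have hb : ∑ _j : Fin m, 2 ≤
              ∑ j : Fin m, (Finset.univ.filter (fun i : Fin a => Qt i j = true)).card := by
            refine Finset.sum_le_sum (fun j _ => ?_)
            exact hcol2 j (by push_neg; exact fun x hx => hex j x hx)
          simp only [Finset.sum_const, Finset.card_univ, Fintype.card_fin, smul_eq_mul] at hb
          omega
      have hwt3 : a + m ≤ wt Qt := by omega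
      have hwt4 : 1 ≤ wt Qt := by omega
      obtain ⟨l'', k'', f', g', hl'', hk'', hf', hg', hr'', hc''⟩ :=
        wtLemma (a + m) a m Qt le_rfl hwt4 hwt3
      have hl''a : l'' ≤ a := by
        have := Fintype.card_le_of_injective f' hf'.injective
        simpa using this
      exact ih l'' k'' (f ∘ cle ∘ f') (g ∘ ge ∘ g') (by omega)
        (hf.comp (hclemono.comp hf')) (hg.comp (hgemono.comp hg')) hl'' hk'' hr'' hc''

/-- Every vertically degenerate 0-1 matrix is acyclic: it contains no
submatrix in which every row and every column contains at least two 1-entries. -/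
theorem statement10 {l k : ℕ} (P : Matrix (Fin l) (Fin k) Bool) (hdeg : VDeg P) :
    MatAcyclic P := by
  rintro ⟨l', k', f, g, hl, hk, hf, hg, hrow, hcol⟩
  exact main_aux P hdeg l' l' k' f g le_rfl hf hg hl hk hrow hcol
end
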